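/- Let G be a finite graph whose vertices are unit vectors in a d-dimensional complex Hilbert space, with an edge between two vertices exactly when the vectors are orthogonal, and suppose a classical model with message alphabet [d_C] exactly reproduces the behavior of the corresponding pure states and all pairwise perfect-discrimination measurements. Then d_C ≥ χ(G), the chromatic number of G. -/

import Mathlib

open Matrix ComplexOrder

/-- If a classical model with alphabet `Fin dC` exactly reproduces the behavior of a family
of pure states (unit vectors `ψ`) together with all pairwise perfect-discrimination
measurements, then `dC` is at least the chromatic number of the orthogonality graph. -/
theorem chromatic_number_lower_bounds_classical_dimension
    {d dC : ℕ} {V Y B Λ : Type*} [Fintype V] [Fintype Y] [Fintype B] [Fintype Λ]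
    (ψ : V → EuclideanSpace ℂ (Fin d)) (hψ : ∀ x, ‖ψ x‖ = 1)
    (G : SimpleGraph V)
    (hG : ∀ a b, G.Adj a b ↔ a ≠ b ∧ (inner ℂ (ψ a) (ψ b) : ℂ) = 0)
    (ρ : V → Matrix (Fin d) (Fin d) ℂ)
    (hρ : ∀ x, ρ x = Matrix.vecMulVec (fun i => ψ x i) (fun i => star (ψ x i)))
    (M : Y → B → Matrix (Fin d) (Fin d) ℂ)
    (hM : ∀ y b, (M y b).PosSemidef) (hM1 : ∀ y, ∑ b, M y b = 1)
    (π' : Λ → ℝ) (hπ : ∀ l, 0 ≤ π' l) (hπ1 : ∑ l, π' l = 1)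
    (DA : Λ → V → Fin dC)
    (pB : Λ → Fin dC → Y → B → ℝ)
    (hpB : ∀ l c y b, 0 ≤ pB l c y b) (hpB1 : ∀ l c y, ∑ b, pB l c y b = 1)
    (hmodel : ∀ x y b, ((∑ l, π' l * pB l (DA l x) y b : ℝ) : ℂ) = (ρ x * M y b).trace)
    (hdisc : ∀ a b : V, G.Adj a b →
        ∃ (y : Y) (bb : B), (ρ a * M y bb).trace = 1 ∧ (ρ b * M y bb).trace = 0) :
    G.chromaticNumber ≤ dC := by
  -- pB is bounded above by 1
  have hpBle : ∀ l c y b, pB l c y b ≤ 1 := by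
    intro l c y b
    calc pB l c y b ≤ ∑ b', pB l c y b' :=
          Finset.single_le_sum (fun b' _ => hpB l c y b') (Finset.mem_univ b)
      _ = 1 := hpB1 l c y
  -- pick l with positive weight
  obtain ⟨l, hl⟩ : ∃ l, π' l ≠ 0 := by
    by_contra h
    push_neg at h
    simp [h] at hπ1
  have hl : 0 < π' l := lt_of_le_of_ne (hπ l) (Ne.symm hl)
  -- DA l is a proper coloring
  have hproper : ∀ a b : V, G.Adj a b → DA l a ≠ DA l b := by
    intro a b hab heq
    obtain ⟨y, bb, h1, h0⟩ := hdisc a b hab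
    have hsa : (∑ l', π' l' * pB l' (DA l' a) y bb : ℝ) = 1 := by
      have := hmodel a y bb
      rw [h1] at this
      exact_mod_cast this
    have hsb : (∑ l', π' l' * pB l' (DA l' b) y bb : ℝ) = 0 := by
      have := hmodel b y bb
      rw [h0] at this
      exact_mod_cast this
    -- from hsb: pB l (DA l b) y bb = 0
    have hzero : π' l * pB l (DA l b) y bb = 0 := by
      have : ∀ l' ∈ Finset.univ, 0 ≤ π' l' * pB l' (DA l' b) y bb :=
        fun l' _ => mul_nonneg (hπ l') (hpB l' _ y bb)
      exact (Finset.sum_eq_zero_iff_of_nonneg this).mp hsb l (Finset.mem_univ l)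
    have hb0 : pB l (DA l b) y bb = 0 := by
      rcases mul_eq_zero.mp hzero with h | h
      · exact absurd h hl.ne'
      · exact h
    -- from hsa: pB l (DA l a) y bb = 1
    have hcompl : (∑ l', π' l' * (1 - pB l' (DA l' a) y bb) : ℝ) = 0 := by
      simp only [mul_sub, mul_one, Finset.sum_sub_distrib, hπ1, hsa, sub_self]
    have hzero' : π' l * (1 - pB l (DA l a) y bb) = 0 := by
      have : ∀ l' ∈ Finset.univ, 0 ≤ π' l' * (1 - pB l' (DA l' a) y bb) :=
        fun l' _ => mul_nonneg (hπ l') (by linarith [hpBle l' (DA l' a) y bb])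
      exact (Finset.sum_eq_zero_iff_of_nonneg this).mp hcompl l (Finset.mem_univ l)
    have ha1 : pB l (DA l a) y bb = 1 := by
      rcases mul_eq_zero.mp hzero' with h | h
      · exact absurd h hl.ne'
      · linarith
    rw [heq, hb0] at ha1
    norm_num at ha1
  have hcol : G.Colorable dC := ⟨SimpleGraph.Coloring.mk (DA l) (fun {a b} h => hproper a b h)⟩
  exact hcol.chromaticNumber_le
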